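/- arXiv:1410.4251 — 2 statements merged into one kernel-verified Lean document; each statement's English description precedes it below -/
import Mathlib

section
/- Let Q_1,...,Q_r be finite generalized ranked posets and let P = (Q_1)^{i_1} × ··· × (Q_r)^{i_r}. Let σ be the automorphism of P which cyclically permutes the i_j copies of Q_j in each block. Then the Möbius polynomial of the fixed-point subposet is M_{P^σ}(z) = ∏_{j=1}^r M_{Q_j}(z^{i_j}). -/
open Finset Polynomial

/-- The Möbius polynomial `M_P(z) = Σ_{p ≤ q} μ(p,q) z^{|q|-|p|}` of a finite poset with a
rank function `rk` (terms with `¬ p ≤ q` vanish since `μ(p,q) = 0` there). -/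
noncomputable def mobiusPoly (P : Type*) [PartialOrder P] [Fintype P] [DecidableEq P]
    [LocallyFiniteOrder P] (rk : P → ℕ) : Polynomial ℤ :=
  ∑ p : P, ∑ q : P, IncidenceAlgebra.mu ℤ p q • (X : Polynomial ℤ) ^ (rk q - rk p)

/-- `rk` is a generalized rank function: `rk p = 0` iff `p` is minimal, and `rk` is
strictly monotone. -/
def IsGenRank {P : Type*} [PartialOrder P] (rk : P → ℕ) : Prop :=
  (∀ p : P, rk p = 0 ↔ IsMin p) ∧ ∀ p q : P, p < q → rk p < rk q

instance piDecidableLE {ι : Type*} [Fintype ι] {α : ι → Type*} [∀ i, Preorder (α i)]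
    [∀ i, DecidableRel (α := α i) (· ≤ ·)] : DecidableRel (α := ∀ i, α i) (· ≤ ·) :=
  fun a b => by change Decidable (∀ i, a i ≤ b i); infer_instance

instance subtypeDecidableLE {α : Type*} [Preorder α] [DecidableRel (α := α) (· ≤ ·)]
    {p : α → Prop} : DecidableRel (α := Subtype p) (· ≤ ·) :=
  fun a b => decidable_of_iff ((a : α) ≤ (b : α)) Subtype.coe_le_coe

instance preorderDecidableLT {α : Type*} [Preorder α] [DecidableRel (α := α) (· ≤ ·)] :
    DecidableRel (α := α) (· < ·) :=
  fun a b => decidable_of_iff (a ≤ b ∧ ¬ b ≤ a) lt_iff_le_not_ge.symm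


open IncidenceAlgebra in
lemma mu_orderIso_aux {α β : Type*} [PartialOrder α] [PartialOrder β]
    [LocallyFiniteOrder α] [LocallyFiniteOrder β] [DecidableEq α] [DecidableEq β]
    (e : α ≃o β) :
    ∀ n : ℕ, ∀ a b : α, (Finset.Icc a b).card ≤ n → mu ℤ (e a) (e b) = mu ℤ a b := by
  intro n
  induction n with
  | zero =>
    intro a b hab
    have hle : ¬ a ≤ b := fun h => by
      have : a ∈ Finset.Icc a b := by simp [h]
      simp [Finset.card_eq_zero.1 (Nat.le_zero.1 hab)] at this
    rw [apply_eq_zero_of_not_le hle, apply_eq_zero_of_not_le (by simpa using hle)]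
  | succ n ih =>
    intro a b hab
    by_cases h : a = b
    · subst h; simp
    · rw [mu_apply, mu_apply, if_neg h, if_neg (fun hh => h (e.injective hh))]
      congr 1
      have himg : Finset.Ico (e a) (e b) = (Finset.Ico a b).image e := by
        ext y
        simp only [Finset.mem_Ico, Finset.mem_image]
        constructor
        · rintro ⟨h1, h2⟩
          exact ⟨e.symm y, ⟨by simpa using e.symm.monotone h1,
            by simpa using e.symm.strictMono h2⟩, by simp⟩
        · rintro ⟨x, ⟨h1, h2⟩, rfl⟩
          exact ⟨e.monotone h1, e.strictMono h2⟩
      rw [himg, Finset.sum_image (fun x _ y _ hxy => e.injective hxy)]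
      refine Finset.sum_congr rfl fun x hx => ?_
      rw [Finset.mem_Ico] at hx
      refine ih a x ?_
      have hss : Finset.Icc a x ⊂ Finset.Icc a b :=
        Finset.ssubset_iff_of_subset (Finset.Icc_subset_Icc_right hx.2.le) |>.2
          ⟨b, by simp [hx.1.trans hx.2.le], by simp [hx.2.not_ge]⟩
      exact Nat.lt_succ_iff.1 (lt_of_lt_of_le (Finset.card_lt_card hss) hab)

open IncidenceAlgebra in
lemma mu_orderIso {α β : Type*} [PartialOrder α] [PartialOrder β]
    [LocallyFiniteOrder α] [LocallyFiniteOrder β] [DecidableEq α] [DecidableEq β]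
    (e : α ≃o β) (a b : α) : mu ℤ (e a) (e b) = mu ℤ a b :=
  mu_orderIso_aux e _ a b le_rfl

lemma mobiusPoly_orderIso {α β : Type*} [PartialOrder α] [PartialOrder β] [Fintype α] [Fintype β]
    [DecidableEq α] [DecidableEq β] [LocallyFiniteOrder α] [LocallyFiniteOrder β]
    (e : α ≃o β) (ra : α → ℕ) (rb : β → ℕ) (h : ∀ a, rb (e a) = ra a) :
    mobiusPoly α ra = mobiusPoly β rb := by
  unfold mobiusPoly
  refine Fintype.sum_equiv e.toEquiv _ _ fun p => ?_
  refine Fintype.sum_equiv e.toEquiv _ _ fun q => ?_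
  show IncidenceAlgebra.mu ℤ p q • (X : Polynomial ℤ) ^ (ra q - ra p) =
    IncidenceAlgebra.mu ℤ (e p) (e q) • (X : Polynomial ℤ) ^ (rb (e q) - rb (e p))
  rw [mu_orderIso, h, h]

open IncidenceAlgebra in
lemma mobiusPoly_prod {α β : Type*} [PartialOrder α] [PartialOrder β] [Fintype α] [Fintype β]
    [DecidableEq α] [DecidableEq β] [LocallyFiniteOrder α] [LocallyFiniteOrder β]
    [DecidableRel (α := α) (· ≤ ·)] [DecidableRel (α := β) (· ≤ ·)]
    (ra : α → ℕ) (rb : β → ℕ) (ha : Monotone ra) (hb : Monotone rb) :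
    mobiusPoly (α × β) (fun y => ra y.1 + rb y.2) = mobiusPoly α ra * mobiusPoly β rb := by
  unfold mobiusPoly
  rw [Finset.sum_mul_sum]
  rw [Fintype.sum_prod_type]
  refine Finset.sum_congr rfl fun p1 _ => Finset.sum_congr rfl fun p2 _ => ?_
  rw [Finset.sum_mul_sum, Fintype.sum_prod_type]
  refine Finset.sum_congr rfl fun q1 _ => Finset.sum_congr rfl fun q2 _ => ?_
  have hmu : mu ℤ ((p1, p2) : α × β) (q1, q2) = mu ℤ p1 q1 * mu ℤ p2 q2 := by
    rw [← mu_prod_mu]; rfl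
  rw [hmu, smul_mul_smul_comm, ← pow_add]
  by_cases h1 : p1 ≤ q1
  · by_cases h2 : p2 ≤ q2
    · have e1 := ha h1; have e2 := hb h2
      congr 2
      show ra q1 + rb q2 - (ra p1 + rb p2) = ra q1 - ra p1 + (rb q2 - rb p2)
      omega
    · simp [apply_eq_zero_of_not_le h2 (mu ℤ)]
  · simp [apply_eq_zero_of_not_le h1 (mu ℤ)]

/-- The order isomorphism between a pi type over `Fin (n+1)` and the product of the head
and the tail. -/
def piSuccOrderIso (n : ℕ) (Q : Fin (n+1) → Type*) [∀ j, Preorder (Q j)] :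
    (∀ j, Q j) ≃o Q 0 × ∀ j : Fin n, Q j.succ where
  toFun f := (f 0, fun j => f j.succ)
  invFun p := Fin.cons p.1 p.2
  left_inv f := Fin.cons_self_tail f
  right_inv p := by
    refine Prod.ext (by simp) (funext fun j => ?_)
    simp
  map_rel_iff' := by
    intro f g
    simp only [Equiv.coe_fn_mk, Prod.mk_le_mk, Pi.le_def]
    rw [Fin.forall_fin_succ]
    exact Iff.rfl

lemma mobiusPoly_pi : ∀ (n : ℕ) (Q : Fin n → Type u) [∀ j, PartialOrder (Q j)]
    [∀ j, Fintype (Q j)] [∀ j, DecidableEq (Q j)] [∀ j, LocallyFiniteOrder (Q j)]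
    [∀ j, DecidableRel (α := Q j) (· ≤ ·)]
    (rk : ∀ j, Q j → ℕ), (∀ j, Monotone (rk j)) →
    mobiusPoly (∀ j, Q j) (fun y => ∑ j, rk j (y j)) = ∏ j, mobiusPoly (Q j) (rk j) := by
  intro n
  induction n with
  | zero =>
    intro Q _ _ _ _ _ rk _
    letI : Unique (∀ j : Fin 0, Q j) :=
      ⟨⟨fun j => j.elim0⟩, fun f => funext fun j => j.elim0⟩
    simp [mobiusPoly, Finset.univ_unique]
  | succ n ih =>
    intro Q _ _ _ _ _ rk hrk
    rw [mobiusPoly_orderIso (piSuccOrderIso n Q) _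
        (fun p => rk 0 p.1 + ∑ j : Fin n, rk j.succ (p.2 j))
        (fun f => by
          show rk 0 (f 0) + ∑ j : Fin n, rk j.succ (f j.succ) = ∑ j, rk j (f j)
          exact (Fin.sum_univ_succ fun j => rk j (f j)).symm)]
    rw [mobiusPoly_prod (fun a : Q 0 => rk 0 a)
        (fun t : ∀ j : Fin n, Q j.succ => ∑ j : Fin n, rk j.succ (t j)) (hrk 0)
        (fun a b hab => Finset.sum_le_sum fun j _ => hrk j.succ (Pi.le_def.1 hab j))]
    rw [ih _ _ (fun j => hrk j.succ), Fin.prod_univ_succ]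

lemma mobiusPoly_comp_pow (P : Type*) [PartialOrder P] [Fintype P] [DecidableEq P]
    [LocallyFiniteOrder P] (rk : P → ℕ) (m : ℕ) :
    (mobiusPoly P rk).comp (X ^ m) = mobiusPoly P (fun a => m * rk a) := by
  unfold mobiusPoly
  simp only [Polynomial.sum_comp, Polynomial.smul_comp, Polynomial.pow_comp,
    Polynomial.X_comp, ← pow_mul]
  refine Finset.sum_congr rfl fun p _ => Finset.sum_congr rfl fun q _ => ?_
  rw [mul_tsub]

lemma const_of_fixed {n : ℕ} {α : Type*} (hn : 0 < n) (x : Fin n → α)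
    (hx : ∀ l, x (finRotate n l) = x l) (l : Fin n) : x l = x ⟨0, hn⟩ := by
  obtain ⟨m, rfl⟩ : ∃ m, n = m + 1 := ⟨n - 1, by omega⟩
  obtain ⟨k, hk⟩ := l
  induction k with
  | zero => rfl
  | succ k ihk =>
    have hk' : k < m + 1 := Nat.lt_of_succ_lt hk
    have h1 : (⟨k+1, hk⟩ : Fin (m+1)) = ⟨k, hk'⟩ + 1 := by
      apply Fin.ext
      have hm1 : (1 : ℕ) % (m+1) = 1 := Nat.mod_eq_of_lt (by omega)
      simp [Fin.add_def, hm1, Nat.mod_eq_of_lt hk]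
    rw [h1, ← finRotate_succ_apply, hx, ihk hk']

/-- The fixed-point subposet is isomorphic to the product of the `Q j`. -/
def fixedOrderIso (r : ℕ) (Q : Fin r → Type*) [∀ j, PartialOrder (Q j)]
    (i : Fin r → ℕ) (hi : ∀ j, 0 < i j) :
    {x : ∀ j, Fin (i j) → Q j // ∀ j l, x j (finRotate (i j) l) = x j l} ≃o (∀ j, Q j) where
  toFun x j := x.1 j ⟨0, hi j⟩
  invFun y := ⟨fun j _ => y j, fun _ _ => rfl⟩
  left_inv x := Subtype.ext <| funext fun j => funext fun l =>
    (const_of_fixed (hi j) (x.1 j) (x.2 j) l).symm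
  right_inv y := rfl
  map_rel_iff' := by
    intro x y
    rw [← Subtype.coe_le_coe]
    constructor
    · intro h j l
      calc x.1 j l = x.1 j ⟨0, hi j⟩ := const_of_fixed (hi j) (x.1 j) (x.2 j) l
        _ ≤ y.1 j ⟨0, hi j⟩ := h j
        _ = y.1 j l := (const_of_fixed (hi j) (y.1 j) (y.2 j) l).symm
    · intro h j
      exact h j ⟨0, hi j⟩

/-- Let `P = (Q₁)^{i₁} × ⋯ × (Q_r)^{i_r}` for finite generalized ranked
posets `Q_j`, and let `σ` be the automorphism of `P` cyclically permuting the `i_j` copies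
of `Q_j` in each block.  The Möbius polynomial of the fixed-point subposet is
`M_{P^σ}(z) = ∏_j M_{Q_j}(z^{i_j})`. -/
theorem mobiusPoly_fixed_points (r : ℕ) (Q : Fin r → Type*) [∀ j, PartialOrder (Q j)]
    [∀ j, Fintype (Q j)] [∀ j, DecidableEq (Q j)] [∀ j, LocallyFiniteOrder (Q j)]
    [∀ j, DecidableRel (α := Q j) (· ≤ ·)]
    (rk : ∀ j, Q j → ℕ) (hrk : ∀ j, IsGenRank (rk j))
    (i : Fin r → ℕ) (hi : ∀ j, 0 < i j) :
    mobiusPoly {x : ∀ j, Fin (i j) → Q j // ∀ j l, x j (finRotate (i j) l) = x j l}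
        (fun x => ∑ j, ∑ l, rk j (x.1 j l)) =
      ∏ j, (mobiusPoly (Q j) (rk j)).comp (X ^ i j) := by
  have hmono : ∀ j, Monotone (rk j) := fun j a b hab => by
    rcases eq_or_lt_of_le hab with h | h
    · rw [h]
    · exact ((hrk j).2 a b h).le
  rw [mobiusPoly_orderIso (fixedOrderIso r Q i hi) _
      (fun y => ∑ j, i j * rk j (y j)) ?_]
  · rw [mobiusPoly_pi r Q (fun j a => i j * rk j a)
        (fun j a b hab => Nat.mul_le_mul_left _ (hmono j hab))]
    exact Finset.prod_congr rfl fun j _ => (mobiusPoly_comp_pow (Q j) (rk j) (i j)).symm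
  · intro x
    refine Finset.sum_congr rfl fun j _ => ?_
    rw [show ∑ l, rk j (x.1 j l) = ∑ _l : Fin (i j), rk j (x.1 j ⟨0, hi j⟩) from
      Finset.sum_congr rfl fun l _ => by rw [const_of_fixed (hi j) (x.1 j) (x.2 j) l]]
    rw [Finset.sum_const, Finset.card_univ, Fintype.card_fin, smul_eq_mul]
    rfl
end

section
/- Let σ be a permutation of {1,...,n} with cycle decomposition into cycles of lengths i_1,...,i_r, acting on the Boolean lattice 2^[n] by relabeling elements. The fixed-point subposet (2^[n])^σ (sets S with σ(S)=S), ranked by cardinality, has Möbius polynomial M_{(2^[n])^σ}(z) = ∏_{j=1}^r (2 - z^{i_j}). -/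
open Finset Polynomial

set_option linter.unusedSectionVars false
set_option linter.unusedVariables false

section MuIso
variable {P Q : Type*} [PartialOrder P] [LocallyFiniteOrder P] [DecidableEq P]
  [PartialOrder Q] [LocallyFiniteOrder Q] [DecidableEq Q]

lemma Ico_orderIso (e : P ≃o Q) (p q : P) : Finset.Ico (e p) (e q) = (Finset.Ico p q).image e := by
  ext y
  simp only [Finset.mem_Ico, Finset.mem_image]
  constructor
  · rintro ⟨h1, h2⟩
    refine ⟨e.symm y, ⟨?_, ?_⟩, by simp⟩
    · simpa using e.symm.monotone h1
    · have := e.symm.strictMono h2; simpa using this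
  · rintro ⟨x, ⟨h1, h2⟩, rfl⟩
    exact ⟨e.monotone h1, e.strictMono h2⟩

lemma mu_orderIso_aux_s14 (e : P ≃o Q) (N : ℕ) : ∀ p q : P, (Finset.Icc p q).card ≤ N →
    IncidenceAlgebra.mu ℤ (e p) (e q) = IncidenceAlgebra.mu ℤ p q := by
  induction N with
  | zero =>
    intro p q h
    have hpq : ¬ p ≤ q := by
      intro hle
      have : q ∈ Finset.Icc p q := by simp [hle]
      have := Finset.card_pos.2 ⟨q, this⟩
      omega
    have hpq' : ¬ e p ≤ e q := by simpa using hpq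
    rw [IncidenceAlgebra.apply_eq_zero_of_not_le hpq', IncidenceAlgebra.apply_eq_zero_of_not_le hpq]
  | succ N ih =>
    intro p q h
    by_cases hpq : p = q
    · subst hpq; simp
    · have hpq' : e p ≠ e q := fun hh => hpq (e.injective hh)
      rw [IncidenceAlgebra.mu_eq_neg_sum_Ico_of_ne hpq, IncidenceAlgebra.mu_eq_neg_sum_Ico_of_ne hpq']
      rw [Ico_orderIso e, Finset.sum_image (fun a _ b _ hab => e.injective hab)]
      congr 1
      apply Finset.sum_congr rfl
      intro x hx
      rw [Finset.mem_Ico] at hx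
      apply ih
      have hsub : Finset.Icc p x ⊂ Finset.Icc p q := by
        apply Finset.ssubset_iff_of_subset (Finset.Icc_subset_Icc_right hx.2.le) |>.mpr
        exact ⟨q, by simp [hx.1.trans hx.2.le], by simp [hx.2.not_ge]⟩
      have := Finset.card_lt_card hsub
      omega

lemma mu_orderIso_s14 (e : P ≃o Q) (p q : P) :
    IncidenceAlgebra.mu ℤ (e p) (e q) = IncidenceAlgebra.mu ℤ p q :=
  mu_orderIso_aux_s14 e (Finset.Icc p q).card p q le_rfl

end MuIso


section MuFinset
variable {α : Type*} [Fintype α] [DecidableEq α]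

omit [Fintype α] in
lemma Icc_finset_eq (A B : Finset α) (h : A ⊆ B) :
    Finset.Icc A B = (B \ A).powerset.image (fun D => A ∪ D) := by
  ext C
  simp only [Finset.mem_Icc, Finset.mem_image, Finset.mem_powerset]
  constructor
  · rintro ⟨h1, h2⟩
    exact ⟨C \ A, Finset.sdiff_subset_sdiff h2 le_rfl, Finset.union_sdiff_of_subset h1⟩
  · rintro ⟨D, hD, rfl⟩
    exact ⟨Finset.subset_union_left, Finset.union_subset h (hD.trans Finset.sdiff_subset)⟩

lemma mu_finset_aux (N : ℕ) : ∀ A B : Finset α, A ⊆ B → (B \ A).card ≤ N →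
    IncidenceAlgebra.mu ℤ A B = (-1) ^ (B \ A).card := by
  induction N with
  | zero =>
    intro A B hAB h
    have h0 : B \ A = ∅ := Finset.card_eq_zero.1 (by omega)
    have : A = B := Finset.Subset.antisymm hAB (Finset.sdiff_eq_empty_iff_subset.1 h0)
    subst this
    simp [h0]
  | succ N ih =>
    intro A B hAB h
    by_cases hA : A = B
    · subst hA; simp
    · have hne : (B \ A).Nonempty := by
        rw [Finset.sdiff_nonempty]
        intro hs
        exact hA (Finset.Subset.antisymm hAB hs)
      have key : ∑ C ∈ Finset.Icc A B, ((-1 : ℤ)) ^ (C \ A).card = 0 := by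
        rw [Icc_finset_eq A B hAB, Finset.sum_image]
        · have : ∀ D ∈ (B \ A).powerset, ((-1:ℤ)) ^ ((A ∪ D) \ A).card = (-1) ^ D.card := by
            intro D hD
            rw [Finset.mem_powerset] at hD
            congr 2
            rw [Finset.union_sdiff_cancel_left]
            exact Finset.disjoint_left.2 fun x hx hxD => (Finset.mem_sdiff.1 (hD hxD)).2 hx
          rw [Finset.sum_congr rfl this]
          exact Finset.sum_powerset_neg_one_pow_card_of_nonempty hne
        · intro D1 h1 D2 h2 heq
          rw [Finset.mem_coe, Finset.mem_powerset] at h1 h2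
          have d1 : Disjoint A D1 := Finset.disjoint_left.2 fun x hx hxD => (Finset.mem_sdiff.1 (h1 hxD)).2 hx
          have d2 : Disjoint A D2 := Finset.disjoint_left.2 fun x hx hxD => (Finset.mem_sdiff.1 (h2 hxD)).2 hx
          have := congrArg (fun S => S \ A) heq
          simpa [Finset.union_sdiff_cancel_left d1, Finset.union_sdiff_cancel_left d2] using this
      rw [Finset.Icc_eq_cons_Ico hAB, Finset.sum_cons] at key
      have hIco : ∑ C ∈ Finset.Ico A B, IncidenceAlgebra.mu ℤ A C
          = ∑ C ∈ Finset.Ico A B, ((-1:ℤ)) ^ (C \ A).card := by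
        apply Finset.sum_congr rfl
        intro C hC
        rw [Finset.mem_Ico] at hC
        apply ih _ _ hC.1
        have hss : C \ A ⊂ B \ A := by
          obtain ⟨x, hxB, hxC⟩ := Finset.exists_of_ssubset hC.2
          refine Finset.ssubset_iff_of_subset (Finset.sdiff_subset_sdiff hC.2.subset le_rfl) |>.mpr
            ⟨x, Finset.mem_sdiff.2 ⟨hxB, fun hxA => hxC (hC.1 hxA)⟩, fun hx => hxC (Finset.mem_sdiff.1 hx).1⟩
        have := Finset.card_lt_card hss
        omega
      rw [IncidenceAlgebra.mu_eq_neg_sum_Ico_of_ne hA, hIco]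
      linarith [key]

lemma mu_finset (A B : Finset α) (h : A ⊆ B) :
    IncidenceAlgebra.mu ℤ A B = (-1) ^ (B \ A).card :=
  mu_finset_aux (B \ A).card A B h le_rfl

end MuFinset

section MuFinsetC
variable {α : Type*} [Fintype α] [DecidableEq α]


lemma signed_sum (T : Finset α) (w : α → ℕ) :
    ∏ a ∈ T, (1 - (X : Polynomial ℤ) ^ w a)
      = ∑ D ∈ T.powerset, ((-1 : ℤ) ^ D.card) • (X : Polynomial ℤ) ^ (∑ a ∈ D, w a) := by
  have : ∀ a ∈ T, (1 - (X : Polynomial ℤ) ^ w a) = (-(X : Polynomial ℤ) ^ w a) + 1 := by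
    intro a _; ring
  rw [Finset.prod_congr rfl this, Finset.prod_add]
  apply Finset.sum_congr rfl
  intro D _
  rw [Finset.prod_const_one, mul_one]
  rw [zsmul_eq_mul]
  push_cast
  have h2 : ∀ a ∈ D, (-(X : Polynomial ℤ) ^ w a) = (-1) * X ^ w a := fun a _ => by ring
  rw [Finset.prod_congr rfl h2, Finset.prod_mul_distrib, Finset.prod_const,
    Finset.prod_pow_eq_pow_sum]

lemma mobiusPoly_finset (w : α → ℕ) :
    mobiusPoly (Finset α) (fun S => ∑ a ∈ S, w a) = ∏ a, (2 - (X : Polynomial ℤ) ^ w a) := by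
  have inner : ∀ A : Finset α,
      (∑ B : Finset α, IncidenceAlgebra.mu ℤ A B • (X : Polynomial ℤ) ^ ((∑ a ∈ B, w a) - ∑ a ∈ A, w a))
        = ∏ a ∈ Finset.univ \ A, (1 - (X : Polynomial ℤ) ^ w a) := by
    intro A
    rw [signed_sum]
    rw [← Finset.sum_subset (Finset.subset_univ (Finset.Icc A Finset.univ))
      (fun B _ hB => by
        rw [IncidenceAlgebra.apply_eq_zero_of_not_le (by simpa [Finset.mem_Icc] using hB), zero_smul])]
    rw [Icc_finset_eq A Finset.univ (Finset.subset_univ A)]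
    rw [Finset.sum_image (fun D1 h1 D2 h2 heq => by
      rw [Finset.mem_coe, Finset.mem_powerset] at h1 h2
      have d1 : Disjoint A D1 := Finset.disjoint_left.2 fun x hx hxD => (Finset.mem_sdiff.1 (h1 hxD)).2 hx
      have d2 : Disjoint A D2 := Finset.disjoint_left.2 fun x hx hxD => (Finset.mem_sdiff.1 (h2 hxD)).2 hx
      have := congrArg (fun S => S \ A) heq
      simpa [Finset.union_sdiff_cancel_left d1, Finset.union_sdiff_cancel_left d2] using this)]
    apply Finset.sum_congr rfl
    intro D hD
    rw [Finset.mem_powerset] at hD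
    have hdisj : Disjoint A D := Finset.disjoint_left.2 fun x hx hxD => (Finset.mem_sdiff.1 (hD hxD)).2 hx
    have h1 : (A ∪ D) \ A = D := Finset.union_sdiff_cancel_left hdisj
    rw [mu_finset A (A ∪ D) Finset.subset_union_left, h1]
    have he : (∑ a ∈ A ∪ D, w a) - ∑ a ∈ A, w a = ∑ a ∈ D, w a := by
      rw [Finset.sum_union hdisj]; omega
    rw [he]
  rw [mobiusPoly]
  rw [Finset.sum_congr rfl (fun A _ => inner A)]
  have hinv : Function.Involutive (fun A : Finset α => Finset.univ \ A) := by
    intro A; simp [Finset.sdiff_sdiff_self_left]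
  have step : (∑ A : Finset α, ∏ a ∈ Finset.univ \ A, (1 - (X : Polynomial ℤ) ^ w a))
      = ∑ T : Finset α, ∏ a ∈ T, (1 - (X : Polynomial ℤ) ^ w a) :=
    Equiv.sum_comp (Function.Involutive.toPerm _ hinv) (fun T => ∏ a ∈ T, (1 - (X : Polynomial ℤ) ^ w a))
  rw [step]
  have h2 : ∀ a ∈ (Finset.univ : Finset α), (2 - (X : Polynomial ℤ) ^ w a)
      = (1 - (X : Polynomial ℤ) ^ w a) + 1 := by intro a _; ring
  rw [Finset.prod_congr rfl h2, Finset.prod_add]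
  rw [← Finset.powerset_univ]
  apply Finset.sum_congr rfl
  intro T _
  simp

end MuFinsetC

section MuIso
variable {P Q : Type*} [PartialOrder P] [LocallyFiniteOrder P] [DecidableEq P]
  [PartialOrder Q] [LocallyFiniteOrder Q] [DecidableEq Q]


lemma mobiusPoly_orderIso_s14 [Fintype P] [Fintype Q] (e : P ≃o Q) (rkQ : Q → ℕ) :
    mobiusPoly P (fun p => rkQ (e p)) = mobiusPoly Q rkQ := by
  rw [mobiusPoly, mobiusPoly]
  rw [← Equiv.sum_comp e.toEquiv
    (fun q => ∑ q' : Q, IncidenceAlgebra.mu ℤ q q' • (X : Polynomial ℤ) ^ (rkQ q' - rkQ q))]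
  apply Finset.sum_congr rfl
  intro p _
  have h1 : ∀ q : P, IncidenceAlgebra.mu ℤ p q = IncidenceAlgebra.mu ℤ (e p) (e q) :=
    fun q => (mu_orderIso_s14 e p q).symm
  simp_rw [h1]
  exact Equiv.sum_comp e.toEquiv
    (fun q' => IncidenceAlgebra.mu ℤ (e p) q' • (X : Polynomial ℤ) ^ (rkQ q' - rkQ (e p)))

end MuIso


variable {n : ℕ} (σ : Equiv.Perm (Fin n))


def orb (x : Fin n) : Finset (Fin n) := Finset.univ.filter (fun y => σ.SameCycle x y)

lemma mem_orb {x y : Fin n} : y ∈ orb σ x ↔ σ.SameCycle x y := by simp [orb]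

lemma self_mem_orb (x : Fin n) : x ∈ orb σ x := (mem_orb σ).2 (Equiv.Perm.SameCycle.refl σ x)

lemma orb_eq_orb {x y : Fin n} (h : σ.SameCycle x y) : orb σ x = orb σ y := by
  ext z; simp only [mem_orb]
  exact ⟨fun hz => h.symm.trans hz, fun hz => h.trans hz⟩

/-- The set of orbits. -/
def Orbs : Finset (Finset (Fin n)) := Finset.univ.image (orb σ)

lemma orb_mem_Orbs (x : Fin n) : orb σ x ∈ Orbs σ :=
  Finset.mem_image_of_mem _ (Finset.mem_univ x)

lemma invariant_closed {S : Finset (Fin n)} (hS : S.image σ = S) {x y : Fin n}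
    (hx : x ∈ S) (hxy : σ.SameCycle x y) : y ∈ S := by
  have key : ∀ z : Fin n, σ z ∈ S ↔ z ∈ S := by
    intro z
    constructor
    · intro hz
      rw [← hS] at hz
      obtain ⟨u, hu, hu2⟩ := Finset.mem_image.1 hz
      rwa [← σ.injective hu2]
    · intro hz
      rw [← hS]
      exact Finset.mem_image_of_mem _ hz
  obtain ⟨k, hk⟩ := hxy
  subst hk
  induction k using Int.induction_on with
  | zero => simpa
  | succ k ih =>
    have : (σ ^ ((k : ℤ) + 1)) x = σ ((σ ^ (k : ℤ)) x) := by
      rw [zpow_add, zpow_one, ← Equiv.Perm.mul_apply, ← (Commute.self_zpow σ (k : ℤ)).eq,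
        Equiv.Perm.mul_apply]
    rw [this, key]
    exact ih
  | pred k ih =>
    have : (σ ^ (-(k : ℤ) - 1)) x = σ.symm ((σ ^ (-(k : ℤ))) x) := by
      have : (-(k : ℤ) - 1) = (-1) + (-(k:ℤ)) := by ring
      rw [this, zpow_add, zpow_neg_one]
      simp [Equiv.Perm.mul_apply]
    rw [this]
    rw [← key]
    simpa using ih

lemma orb_apply (x : Fin n) : orb σ (σ x) = orb σ x :=
  (orb_eq_orb σ ⟨1, by simp⟩).symm

/-- Orbits of support points equal supports of cycle factors. -/
lemma orb_eq_support_cycleOf {x : Fin n} (hx : x ∈ σ.support) :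
    orb σ x = (σ.cycleOf x).support := by
  ext y
  rw [mem_orb, Equiv.Perm.mem_support_cycleOf_iff]
  exact ⟨fun h => ⟨h, hx⟩, fun h => h.1⟩

lemma orb_of_not_mem_support {x : Fin n} (hx : x ∉ σ.support) : orb σ x = {x} := by
  ext y
  rw [mem_orb, Finset.mem_singleton]
  constructor
  · rintro ⟨k, rfl⟩
    exact Equiv.Perm.zpow_apply_eq_self_of_apply_eq_self (by simpa using hx) k
  · rintro rfl; exact Equiv.Perm.SameCycle.refl σ y

lemma orbs_filter_support : (Orbs σ).filter (fun o => o ⊆ σ.support)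
    = σ.cycleFactorsFinset.image Equiv.Perm.support := by
  ext o
  simp only [Finset.mem_filter, Finset.mem_image, Orbs]
  constructor
  · rintro ⟨⟨x, -, rfl⟩, hsub⟩
    have hx : x ∈ σ.support := hsub (self_mem_orb σ x)
    refine ⟨σ.cycleOf x, Equiv.Perm.cycleOf_mem_cycleFactorsFinset_iff.2 hx, ?_⟩
    exact (orb_eq_support_cycleOf σ hx).symm
  · rintro ⟨c, hc, rfl⟩
    have hcyc : c.IsCycle := (Equiv.Perm.mem_cycleFactorsFinset_iff.1 hc).1
    obtain ⟨x, hxc⟩ := Finset.card_pos.1 (lt_of_lt_of_le two_pos hcyc.two_le_card_support)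
    have hxs : x ∈ σ.support := Equiv.Perm.mem_cycleFactorsFinset_support_le hc hxc
    have hco : c = σ.cycleOf x := Equiv.Perm.cycle_is_cycleOf hxc hc
    constructor
    · exact ⟨x, Finset.mem_univ x, by rw [orb_eq_support_cycleOf σ hxs, ← hco]⟩
    · exact Equiv.Perm.mem_cycleFactorsFinset_support_le hc

lemma orbs_filter_not_support : (Orbs σ).filter (fun o => ¬ o ⊆ σ.support)
    = (Finset.univ \ σ.support).image (fun x => ({x} : Finset (Fin n))) := by
  ext o
  simp only [Finset.mem_filter, Finset.mem_image, Finset.mem_sdiff, Finset.mem_univ, true_and, Orbs]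
  constructor
  · rintro ⟨⟨x, -, rfl⟩, hsub⟩
    have : ∃ y ∈ orb σ x, y ∉ σ.support := by
      by_contra h
      push_neg at h
      exact hsub h
    obtain ⟨y, hy, hys⟩ := this
    refine ⟨y, hys, ?_⟩
    rw [orb_eq_orb σ ((mem_orb σ).1 hy), orb_of_not_mem_support σ hys]

  · rintro ⟨x, hxs, rfl⟩
    refine ⟨⟨x, orb_of_not_mem_support σ hxs⟩, ?_⟩
    intro h
    exact hxs (h (Finset.mem_singleton_self x))


lemma support_injOn_cycleFactors : Set.InjOn Equiv.Perm.support (σ.cycleFactorsFinset : Set (Equiv.Perm (Fin n))) := by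
  intro c hc d hd heq
  by_contra hne
  have hdisj := σ.cycleFactorsFinset_pairwise_disjoint hc hd hne
  have hcyc : c.IsCycle := (Equiv.Perm.mem_cycleFactorsFinset_iff.1 hc).1
  obtain ⟨x, hxc⟩ := Finset.card_pos.1 (lt_of_lt_of_le two_pos hcyc.two_le_card_support)
  have hxd : x ∈ d.support := heq ▸ hxc
  rw [Equiv.Perm.disjoint_iff_disjoint_support] at hdisj
  exact Finset.disjoint_left.1 hdisj hxc hxd

lemma orbs_card_multiset : (Orbs σ).val.map Finset.card
    = σ.cycleType + Multiset.replicate (n - σ.support.card) 1 := by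
  have hval : (Orbs σ).val = ((Orbs σ).filter (fun o => o ⊆ σ.support)).val
      + ((Orbs σ).filter (fun o => ¬ o ⊆ σ.support)).val := by
    rw [Finset.filter_val, Finset.filter_val]
    exact (Multiset.filter_add_not _ _).symm
  rw [hval, Multiset.map_add]
  congr 1
  · -- cycle part
    rw [orbs_filter_support, Finset.image_val_of_injOn (support_injOn_cycleFactors σ),
      Multiset.map_map]
    rfl
  · -- fixed part
    rw [orbs_filter_not_support, Finset.image_val_of_injOn
      (fun x _ y _ h => Finset.singleton_injective h), Multiset.map_map]
    rw [Multiset.eq_replicate]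
    constructor
    · simp [Finset.card_sdiff_of_subset (Finset.subset_univ _)]
    · intro b hb
      obtain ⟨x, -, rfl⟩ := Multiset.mem_map.1 hb
      simp


abbrev OmegaT := {o : Finset (Fin n) // o ∈ Orbs σ}

abbrev PosetT := {S : Finset (Fin n) // S.image σ = S}

def toOrbSet (S : PosetT σ) : Finset (OmegaT σ) :=
  Finset.univ.filter (fun o => o.1 ⊆ S.1)

def ofOrbSet (T : Finset (OmegaT σ)) : Finset (Fin n) :=
  Finset.univ.filter (fun x => (⟨orb σ x, orb_mem_Orbs σ x⟩ : OmegaT σ) ∈ T)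

lemma ofOrbSet_invariant (T : Finset (OmegaT σ)) : (ofOrbSet σ T).image σ = ofOrbSet σ T := by
  ext y
  simp only [ofOrbSet, Finset.mem_image, Finset.mem_filter, Finset.mem_univ, true_and]
  constructor
  · rintro ⟨x, hx, rfl⟩
    have : orb σ (σ x) = orb σ x := orb_apply σ x
    rwa [show (⟨orb σ (σ x), orb_mem_Orbs σ (σ x)⟩ : OmegaT σ)
      = ⟨orb σ x, orb_mem_Orbs σ x⟩ from Subtype.ext this]
  · intro hy
    refine ⟨σ.symm y, ?_, by simp⟩
    have : orb σ (σ.symm y) = orb σ y := by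
      conv_rhs => rw [show y = σ (σ.symm y) by simp]
      exact (orb_apply σ (σ.symm y)).symm
    rwa [show (⟨orb σ (σ.symm y), orb_mem_Orbs σ (σ.symm y)⟩ : OmegaT σ)
      = ⟨orb σ y, orb_mem_Orbs σ y⟩ from Subtype.ext this]

lemma orb_subset_of_invariant {S : Finset (Fin n)} (hS : S.image σ = S) {x : Fin n}
    (hx : x ∈ S) : orb σ x ⊆ S := fun y hy => invariant_closed σ hS hx ((mem_orb σ).1 hy)

lemma left_inv_orb (S : PosetT σ) : ofOrbSet σ (toOrbSet σ S) = S.1 := by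
  ext x
  simp only [ofOrbSet, toOrbSet, Finset.mem_filter, Finset.mem_univ, true_and]
  constructor
  · intro h
    exact h (self_mem_orb σ x)
  · intro h
    exact orb_subset_of_invariant σ S.2 h

lemma right_inv_orb (T : Finset (OmegaT σ)) :
    toOrbSet σ ⟨ofOrbSet σ T, ofOrbSet_invariant σ T⟩ = T := by
  ext o
  obtain ⟨x0, -, hx0⟩ := Finset.mem_image.1 o.2
  simp only [toOrbSet, Finset.mem_filter, Finset.mem_univ, true_and]
  constructor
  · intro h
    have := h (by rw [← hx0] at *; exact self_mem_orb σ x0)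
    simp only [ofOrbSet, Finset.mem_filter, Finset.mem_univ, true_and] at this
    rwa [show (⟨orb σ x0, orb_mem_Orbs σ x0⟩ : OmegaT σ) = o from Subtype.ext hx0] at this
  · intro ho y hy
    simp only [ofOrbSet, Finset.mem_filter, Finset.mem_univ, true_and]
    have hyo : y ∈ orb σ x0 := by rw [hx0]; exact hy
    have : orb σ y = orb σ x0 := (orb_eq_orb σ ((mem_orb σ).1 hyo)).symm
    rwa [show (⟨orb σ y, orb_mem_Orbs σ y⟩ : OmegaT σ) = o from Subtype.ext (this.trans hx0)]

lemma toOrbSet_subset_iff (S S' : PosetT σ) : toOrbSet σ S ⊆ toOrbSet σ S' ↔ S.1 ⊆ S'.1 := by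
  constructor
  · intro h x hx
    have h1 : (⟨orb σ x, orb_mem_Orbs σ x⟩ : OmegaT σ) ∈ toOrbSet σ S := by
      simp only [toOrbSet, Finset.mem_filter, Finset.mem_univ, true_and]
      exact orb_subset_of_invariant σ S.2 hx
    have h2 := h h1
    simp only [toOrbSet, Finset.mem_filter, Finset.mem_univ, true_and] at h2
    exact h2 (self_mem_orb σ x)
  · intro h o ho
    simp only [toOrbSet, Finset.mem_filter, Finset.mem_univ, true_and] at *
    exact ho.trans h

noncomputable def orbIso : PosetT σ ≃o Finset (OmegaT σ) where
  toFun := toOrbSet σ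
  invFun T := ⟨ofOrbSet σ T, ofOrbSet_invariant σ T⟩
  left_inv S := Subtype.ext (left_inv_orb σ S)
  right_inv T := right_inv_orb σ T
  map_rel_iff' {S S'} := toOrbSet_subset_iff σ S S'

lemma rank_eq (S : PosetT σ) : S.1.card = ∑ o ∈ toOrbSet σ S, o.1.card := by
  rw [Finset.card_eq_sum_card_fiberwise
    (f := fun x => (⟨orb σ x, orb_mem_Orbs σ x⟩ : OmegaT σ)) (t := toOrbSet σ S)
    (fun x hx => by
      simp only [toOrbSet, Finset.mem_coe, Finset.mem_filter, Finset.mem_univ, true_and]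
      exact orb_subset_of_invariant σ S.2 hx)]
  apply Finset.sum_congr rfl
  intro o ho
  simp only [toOrbSet, Finset.mem_filter, Finset.mem_univ, true_and] at ho
  congr 1
  ext y
  simp only [Finset.mem_filter]
  constructor
  · rintro ⟨hyS, hyo⟩
    rw [← hyo]
    exact self_mem_orb σ y
  · intro hy
    refine ⟨ho hy, ?_⟩
    obtain ⟨x0, -, hx0⟩ := Finset.mem_image.1 o.2
    have hyo : y ∈ orb σ x0 := by rw [hx0]; exact hy
    exact Subtype.ext (((orb_eq_orb σ ((mem_orb σ).1 hyo)).symm).trans hx0)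



/-- Let `σ` be a permutation of `{1,…,n}` whose cycle decomposition
(including fixed points as 1-cycles) has cycle lengths `i₁, …, i_r`.  The subposet of the
Boolean lattice consisting of the `σ`-invariant subsets, ordered by inclusion and ranked by
cardinality, has Möbius polynomial `∏_{j=1}^r (2 - z^{i_j})`. -/
theorem mobiusPoly_boolean_fixed (n r : ℕ) (σ : Equiv.Perm (Fin n)) (i : Fin r → ℕ)
    (hcycles : Multiset.map i (Finset.univ.val : Multiset (Fin r)) =
      σ.cycleType + Multiset.replicate (n - σ.support.card) 1) :
    mobiusPoly {S : Finset (Fin n) // S.image σ = S} (fun S => S.1.card) =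
      ∏ j, (2 - (X : Polynomial ℤ) ^ i j) := by
  have hrk : (fun S : PosetT σ => S.1.card)
      = (fun S : PosetT σ => ∑ o ∈ orbIso σ S, o.1.card) :=
    funext (fun S => rank_eq σ S)
  have step1 : mobiusPoly {S : Finset (Fin n) // S.image σ = S} (fun S => S.1.card)
      = mobiusPoly (Finset (OmegaT σ)) (fun T => ∑ o ∈ T, o.1.card) :=
    (congrArg (mobiusPoly (PosetT σ)) hrk).trans
      (mobiusPoly_orderIso_s14 (orbIso σ) (fun T => ∑ o ∈ T, o.1.card))
  rw [step1, mobiusPoly_finset (fun o : OmegaT σ => o.1.card)]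
  have hmulti : (Finset.univ : Finset (OmegaT σ)).val.map (fun o => o.1.card)
      = Multiset.map i (Finset.univ.val : Multiset (Fin r)) := by
    rw [Finset.univ_eq_attach, Finset.attach_val]
    exact (Multiset.attach_map_val' _ Finset.card).trans
      (by rw [orbs_card_multiset σ, hcycles])
  rw [Finset.prod_eq_multiset_prod, Finset.prod_eq_multiset_prod]
  rw [show (Finset.univ.val.map fun o : OmegaT σ => 2 - (X : Polynomial ℤ) ^ o.1.card)
      = ((Finset.univ : Finset (OmegaT σ)).val.map (fun o => o.1.card)).map
        (fun m => 2 - (X : Polynomial ℤ) ^ m) by rw [Multiset.map_map]; rfl]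
  rw [hmulti, Multiset.map_map]
  rfl
end
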